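/- arXiv:1610.02477 — 4 statements merged into one kernel-verified Lean document; each statement's English description precedes it below -/
import Mathlib

section
/- Let ρ^{AB} be a bipartite density matrix with entries p_{ij,kl} = ⟨i j|ρ|k l⟩. If for every positive semidefinite operator N ≤ I on B the matrix with (i,k) entry Σ_{jl} p_{ij,kl} N_{lj} has vanishing off-diagonal part (i ≠ k), then p_{ij,kl} = 0 for all j, l whenever i ≠ k; equivalently ρ^{AB} = Σ_i |i⟩⟨i| ⊗ σ_i for some positive semidefinite σ_i, i.e., ρ^{AB} is an incoherent-quantum state. -/
open Matrix BigOperators Finset ComplexOrder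

lemma conj_mul_self' (z : ℂ) : (starRingEnd ℂ) z * z = ((‖z‖^2 : ℝ) : ℂ) := by
  rw [mul_comm, Complex.mul_conj]
  norm_cast
  rw [Complex.normSq_eq_norm_sq]

lemma rankOneN {dB : ℕ} (v : Fin dB → ℂ) (hv : ∑ j, ‖v j‖^2 ≤ 2) :
    (Matrix.of fun l j => (2:ℂ)⁻¹ * (v l * (starRingEnd ℂ) (v j))).PosSemidef ∧
    ((1 : Matrix (Fin dB) (Fin dB) ℂ)
      - Matrix.of fun l j => (2:ℂ)⁻¹ * (v l * (starRingEnd ℂ) (v j))).PosSemidef := by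
  have hherm : (Matrix.of fun l j => (2:ℂ)⁻¹ * (v l * (starRingEnd ℂ) (v j))).IsHermitian := by
    ext l j
    simp only [Matrix.conjTranspose_apply, Matrix.of_apply, ← starRingEnd_apply,
      _root_.map_mul, map_inv₀, Complex.conj_conj, map_ofNat]
    ring
  have hform : ∀ x : Fin dB → ℂ,
      dotProduct (star x) ((Matrix.of fun l j => (2:ℂ)⁻¹ * (v l * (starRingEnd ℂ) (v j))) *ᵥ x)
        = (2:ℂ)⁻¹ * ((starRingEnd ℂ) (∑ j, (starRingEnd ℂ) (v j) * x j)
              * (∑ j, (starRingEnd ℂ) (v j) * x j)) := by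
    intro x
    have hconj : (starRingEnd ℂ) (∑ j, (starRingEnd ℂ) (v j) * x j)
        = ∑ l, v l * (starRingEnd ℂ) (x l) := by
      rw [map_sum]
      refine Finset.sum_congr rfl fun l _ => ?_
      rw [_root_.map_mul, Complex.conj_conj]
    rw [hconj, Finset.sum_mul_sum, Finset.mul_sum]
    simp only [dotProduct, mulVec, Matrix.of_apply, Pi.star_apply]
    refine Finset.sum_congr rfl fun l _ => ?_
    rw [Finset.mul_sum, Finset.mul_sum]
    refine Finset.sum_congr rfl fun j _ => ?_
    simp only [← starRingEnd_apply]
    ring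
  constructor
  · exact Matrix.PosSemidef.of_dotProduct_mulVec_nonneg hherm (fun x => by
      rw [hform x, conj_mul_self']
      have : (2:ℂ)⁻¹ * ((‖∑ j, (starRingEnd ℂ) (v j) * x j‖^2 : ℝ) : ℂ)
          = ((2⁻¹ * ‖∑ j, (starRingEnd ℂ) (v j) * x j‖^2 : ℝ) : ℂ) := by push_cast; ring
      rw [this, Complex.zero_le_real]
      positivity)
  · refine Matrix.PosSemidef.of_dotProduct_mulVec_nonneg (Matrix.isHermitian_one.sub hherm) fun x => ?_
    rw [Matrix.sub_mulVec, dotProduct_sub, hform x, Matrix.one_mulVec, conj_mul_self']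
    have hxx : dotProduct (star x) x = ((∑ j, ‖x j‖^2 : ℝ) : ℂ) := by
      simp only [dotProduct, Pi.star_apply]
      push_cast
      refine Finset.sum_congr rfl fun j _ => ?_
      rw [← starRingEnd_apply, conj_mul_self', Complex.ofReal_pow]
    rw [hxx]
    set t := ‖∑ j, (starRingEnd ℂ) (v j) * x j‖ with ht
    have hcs : t^2 ≤ 2 * ∑ j, ‖x j‖^2 := by
      have h1 : t ≤ ∑ j, ‖v j‖ * ‖x j‖ := by
        refine (norm_sum_le _ _).trans ?_
        refine Finset.sum_le_sum fun j _ => ?_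
        rw [norm_mul]
        simp
      have h2 : (∑ j, ‖v j‖ * ‖x j‖)^2 ≤ (∑ j, ‖v j‖^2) * (∑ j, ‖x j‖^2) :=
        Finset.sum_mul_sq_le_sq_mul_sq _ _ _
      calc t^2 ≤ (∑ j, ‖v j‖ * ‖x j‖)^2 := by
            apply pow_le_pow_left₀ (norm_nonneg _) h1
        _ ≤ (∑ j, ‖v j‖^2) * (∑ j, ‖x j‖^2) := h2
        _ ≤ 2 * ∑ j, ‖x j‖^2 := by
            exact mul_le_mul_of_nonneg_right hv
              (Finset.sum_nonneg fun j _ => sq_nonneg _)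
    have heq : ((∑ j, ‖x j‖^2 : ℝ) : ℂ) - (2:ℂ)⁻¹ * ((t^2 : ℝ) : ℂ)
        = (((∑ j, ‖x j‖^2) - 2⁻¹ * t^2 : ℝ) : ℂ) := by push_cast; ring
    rw [heq, Complex.zero_le_real]
    linarith

/-- If for every positive semidefinite `N ≤ I` on B the post-operation reduced state of A
(with entries `Σ_{jl} p_{ij,kl} N_{lj}`) has vanishing off-diagonal part, then
`ρ^{AB}` is an incoherent-quantum state: all entries with `i ≠ k` vanish. -/
theorem no_RCC_for_all_operations_implies_incoherent_quantum
    {dA dB : ℕ}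
    (ρAB : Matrix (Fin dA × Fin dB) (Fin dA × Fin dB) ℂ)
    (hρ : ρAB.PosSemidef) (htr : ρAB.trace = 1)
    (h : ∀ N : Matrix (Fin dB) (Fin dB) ℂ, N.PosSemidef →
        ((1 : Matrix (Fin dB) (Fin dB) ℂ) - N).PosSemidef →
        ∀ i k : Fin dA, i ≠ k → ∑ j, ∑ l, ρAB (i, j) (k, l) * N l j = 0) :
    ∀ i k : Fin dA, i ≠ k → ∀ j l : Fin dB, ρAB (i, j) (k, l) = 0 := by
  intro i k hik
  have key : ∀ v : Fin dB → ℂ, (∑ j, ‖v j‖^2 ≤ 2) →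
      ∑ j, ∑ l, ρAB (i, j) (k, l) * (v l * (starRingEnd ℂ) (v j)) = 0 := by
    intro v hv
    obtain ⟨h1, h2⟩ := rankOneN v hv
    have := h _ h1 h2 i k hik
    simp only [Matrix.of_apply] at this
    have h2' : ∑ j, ∑ l, ρAB (i, j) (k, l) * (v l * (starRingEnd ℂ) (v j))
        = 2 * ∑ j, ∑ l, ρAB (i, j) (k, l) * ((2:ℂ)⁻¹ * (v l * (starRingEnd ℂ) (v j))) := by
      rw [Finset.mul_sum]
      refine Finset.sum_congr rfl fun j _ => ?_
      rw [Finset.mul_sum]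
      refine Finset.sum_congr rfl fun l _ => ?_
      ring
    rw [h2', this, mul_zero]
  -- diagonal (in B) entries vanish
  have diag : ∀ j0 : Fin dB, ρAB (i, j0) (k, j0) = 0 := by
    intro j0
    have hv : ∑ j, ‖(fun m => if m = j0 then (1:ℂ) else 0) j‖^2 ≤ 2 := by
      simp [apply_ite norm, Finset.sum_ite_eq']
    have := key _ hv
    simpa [ite_mul, mul_ite, Finset.sum_ite_eq'] using this
  intro j0 l0
  by_cases hjl : j0 = l0
  · subst hjl; exact diag j0
  -- v = e_{j0} + c • e_{l0}
  have gen : ∀ c : ℂ, ‖c‖ = 1 →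
      ρAB (i, j0) (k, l0) * c + ρAB (i, l0) (k, j0) * (starRingEnd ℂ) c = 0 := by
    intro c hc
    set v : Fin dB → ℂ := fun m => (if m = j0 then (1:ℂ) else 0) + (if m = l0 then c else 0)
      with hvdef
    have hv : ∑ j, ‖v j‖^2 ≤ 2 := by
      have : ∀ j, ‖v j‖^2 = (if j = j0 then 1 else 0) + (if j = l0 then 1 else 0) := by
        intro j
        rcases eq_or_ne j j0 with rfl | h1
        · simp [hvdef, hjl]
        · rcases eq_or_ne j l0 with rfl | h2
          · simp [hvdef, h1, hc]
          · simp [hvdef, h1, h2]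
      rw [Finset.sum_congr rfl fun j _ => this j]
      simp only [Finset.sum_add_distrib, Finset.sum_ite_eq', Finset.mem_univ, if_true]
      norm_num
    have := key v hv
    simp only [hvdef, map_add, apply_ite (starRingEnd ℂ), _root_.map_one, _root_.map_zero,
      mul_add, add_mul, mul_ite, ite_mul,
      zero_mul, mul_zero, zero_add, add_zero, Finset.sum_add_distrib, Finset.sum_ite_eq',
      Finset.mem_univ, if_true, mul_one, one_mul, hjl, Ne.symm hjl, if_false, diag,
      Finset.sum_ite_irrel, Finset.sum_const_zero] at this
    linear_combination this
  have g1 := gen 1 (by simp)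
  have g2 := gen Complex.I (by simp)
  simp only [_root_.map_one, mul_one, Complex.conj_I] at g1 g2
  have h' : (ρAB (i, j0) (k, l0) - ρAB (i, l0) (k, j0)) * Complex.I = 0 := by
    linear_combination g2
  have h3 : ρAB (i, j0) (k, l0) = ρAB (i, l0) (k, j0) := by
    rcases mul_eq_zero.mp h' with hh | hh
    · exact sub_eq_zero.mp hh
    · exact absurd hh Complex.I_ne_zero
  have h4 : (2:ℂ) * ρAB (i, j0) (k, l0) = 0 := by
    rw [h3]; linear_combination g1 - h3
  have h2 : (2:ℂ) ≠ 0 := two_ne_zero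
  exact (mul_eq_zero.mp h4).resolve_left h2
end

section
/- Let |ψ^{AB}⟩ = Σ_i √ω_i |i⟩|β_i⟩ (Schmidt form, Σω_i = 1, {|β_i⟩} orthonormal), $ a CP map on B with N = Σ_n F_n†F_n, p' = tr[(I⊗$)|ψ⟩⟨ψ|] > 0, N_{ji} = ⟨β_j|N|β_i⟩. Then the l1-coherence of the post-operation state ρ^A' satisfies C_{l1}(ρ^A') = (1/p') Σ_{i≠j} √(ω_i ω_j)|N_{ji}| ≤ (E(|ψ^{AB}⟩)/p') · √(Σ_{j<i} |N_{ji}|²), where E(|ψ^{AB}⟩) = √(2 Σ_{i≠j} ω_i ω_j) is the concurrence. -/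
open Matrix Kronecker BigOperators Finset ComplexOrder

noncomputable def l1Coh {d : ℕ} (ρ : Matrix (Fin d) (Fin d) ℂ) : ℝ :=
  ∑ i, ∑ j, if i ≠ j then ‖ρ i j‖ else 0

noncomputable def ptraceB {dA dB : ℕ}
    (ρ : Matrix (Fin dA × Fin dB) (Fin dA × Fin dB) ℂ) : Matrix (Fin dA) (Fin dA) ℂ :=
  fun i k => ∑ j, ρ (i, j) (k, j)

theorem ptraceB_entry' {dA dB : ℕ} {ι : Type*} [Fintype ι]
    (ψ : Fin dA × Fin dB → ℂ) (F : ι → Matrix (Fin dB) (Fin dB) ℂ) (i k : Fin dA) :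
    ptraceB (∑ n, ((1 : Matrix (Fin dA) (Fin dA) ℂ) ⊗ₖ F n) *
        Matrix.vecMulVec ψ (star ψ) * ((1 : Matrix (Fin dA) (Fin dA) ℂ) ⊗ₖ F n)ᴴ) i k
    = ∑ b, ∑ d, ψ (i, b) * (starRingEnd ℂ) (ψ (k, d)) * (∑ n, (F n)ᴴ * F n) d b := by
  simp only [ptraceB, Matrix.sum_apply, Matrix.mul_apply, Matrix.conjTranspose_apply,
    kroneckerMap_apply, Matrix.vecMulVec_apply, Pi.star_apply, Matrix.one_apply,
    Fintype.sum_prod_type, ite_mul, mul_ite, one_mul, zero_mul, mul_zero,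
    Finset.sum_ite_irrel, Finset.sum_const_zero,
    Finset.sum_ite_eq, Finset.mem_univ, if_true,
    apply_ite (starRingEnd ℂ), map_zero, _root_.map_mul, RCLike.star_def]
  simp only [Finset.mul_sum, Finset.sum_mul]
  conv_lhs => enter [2, j, 2, n]; rw [Finset.sum_comm]
  conv_lhs => enter [2, j]; rw [Finset.sum_comm]
  conv_lhs => rw [Finset.sum_comm]
  conv_lhs => enter [2, b, 2, j]; rw [Finset.sum_comm]
  conv_lhs => enter [2, b]; rw [Finset.sum_comm]
  conv_lhs => enter [2, b, 2, d]; rw [Finset.sum_comm]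
  refine Finset.sum_congr rfl fun b _ => Finset.sum_congr rfl fun d _ =>
    Finset.sum_congr rfl fun n _ => Finset.sum_congr rfl fun j _ => by ring

/-- Off-diagonal sum of a symmetric family equals twice the lower-triangular sum. -/
theorem offdiag_eq_two_tri {d : ℕ} (t : Fin d → Fin d → ℝ) (hsym : ∀ i j, t i j = t j i) :
    ∑ i, ∑ j, (if i ≠ j then t i j else 0)
      = 2 * ∑ i, ∑ j, (if j < i then t i j else 0) := by
  have split : ∀ i j : Fin d, (if i ≠ j then t i j else 0)
      = (if j < i then t i j else 0) + (if i < j then t i j else 0) := by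
    intro i j
    rcases lt_trichotomy i j with h | h | h
    · simp [h, h.ne, not_lt.mpr h.le, h.ne']
    · simp [h]
    · simp [h, h.ne', not_lt.mpr h.le, h.ne]
  simp only [split, Finset.sum_add_distrib]
  have : ∑ i, ∑ j, (if i < j then t i j else 0)
      = ∑ i, ∑ j, (if j < i then t i j else 0) := by
    rw [Finset.sum_comm]
    exact Finset.sum_congr rfl fun i _ => Finset.sum_congr rfl fun j _ => by
      by_cases h : j < i <;> simp [h, hsym]
  rw [this]; ring

/-- Lemma 1: `C(ρ^A') = (1/p') Σ_{i≠j} √(ω_i ω_j)|N_{ji}|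
  ≤ (E(ψ)/p') √(Σ_{j<i}|N_{ji}|²)`, with `E(ψ) = √(2 Σ_{i≠j} ω_i ω_j)`. -/
theorem RCC_upper_bound
    {dA dB : ℕ} {ι : Type*} [Fintype ι]
    (ω : Fin dA → ℝ) (hω : ∀ i, 0 < ω i) (hωsum : ∑ i, ω i = 1)
    (β : Fin dA → Fin dB → ℂ)
    (hβ : ∀ i k, ∑ j, (starRingEnd ℂ) (β i j) * β k j = if i = k then 1 else 0)
    (ψ : Fin dA × Fin dB → ℂ)
    (hψ : ∀ i j, ψ (i, j) = (Real.sqrt (ω i) : ℂ) * β i j)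
    (F : ι → Matrix (Fin dB) (Fin dB) ℂ)
    (N : Matrix (Fin dB) (Fin dB) ℂ) (hNdef : N = ∑ n, (F n)ᴴ * (F n))
    (Nmat : Fin dA → Fin dA → ℂ)
    (hNmat : ∀ j i, Nmat j i = ∑ l, ∑ m, (starRingEnd ℂ) (β j l) * N l m * β i m)
    (ρAB' : Matrix (Fin dA × Fin dB) (Fin dA × Fin dB) ℂ)
    (hρAB' : ρAB' = ∑ n, ((1 : Matrix (Fin dA) (Fin dA) ℂ) ⊗ₖ F n) *
        Matrix.vecMulVec ψ (star ψ) * ((1 : Matrix (Fin dA) (Fin dA) ℂ) ⊗ₖ F n)ᴴ)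
    (p' : ℝ) (hp' : p' = (ρAB'.trace).re) (hp'pos : 0 < p')
    (ρA' : Matrix (Fin dA) (Fin dA) ℂ)
    (hρA' : ρA' = (p' : ℂ)⁻¹ • ptraceB ρAB')
    (E : ℝ) (hE : E = Real.sqrt (2 * ∑ i, ∑ j, if i ≠ j then ω i * ω j else 0)) :
    l1Coh ρA' = (1 / p') * ∑ i, ∑ j, (if i ≠ j then
        Real.sqrt (ω i * ω j) * ‖Nmat j i‖ else 0) ∧
    l1Coh ρA' ≤ (E / p') *
        Real.sqrt (∑ i, ∑ j, if j < i then ‖Nmat j i‖ ^ 2 else 0) := by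
  -- Hermiticity of N
  have hNH : ∀ l m, (starRingEnd ℂ) (N l m) = N m l := by
    intro l m
    rw [hNdef]
    simp only [Matrix.sum_apply, map_sum, Matrix.mul_apply, Matrix.conjTranspose_apply,
      _root_.map_mul, RingHomCompTriple.comp_apply, Complex.conj_conj, RingHom.id_apply]
    exact Finset.sum_congr rfl fun n _ => Finset.sum_congr rfl fun j _ => by
      simp only [RCLike.star_def, Complex.conj_conj]; ring
  -- symmetry of |Nmat|
  have hNconj : ∀ i j, (starRingEnd ℂ) (Nmat i j) = Nmat j i := by
    intro i j
    rw [hNmat, hNmat, map_sum, Finset.sum_comm]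
    refine Finset.sum_congr rfl fun l _ => ?_
    rw [map_sum]
    refine Finset.sum_congr rfl fun m _ => ?_
    simp only [_root_.map_mul, Complex.conj_conj, hNH]
    ring
  have habs : ∀ i j, ‖Nmat i j‖ = ‖Nmat j i‖ := fun i j => by
    rw [← hNconj i j, Complex.norm_conj]
  -- entry formula for ρA'
  have hentry : ∀ i k, ρA' i k
      = (p' : ℂ)⁻¹ * ((Real.sqrt (ω i) : ℂ) * (Real.sqrt (ω k) : ℂ) * Nmat k i) := by
    intro i k
    rw [hρA', Matrix.smul_apply, smul_eq_mul, hρAB', ptraceB_entry']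
    congr 1
    rw [hNmat, ← hNdef, Finset.sum_comm]
    simp only [hψ, _root_.map_mul, Complex.conj_ofReal, Finset.mul_sum]
    refine Finset.sum_congr rfl fun b _ => Finset.sum_congr rfl fun d _ => by ring
  -- absolute value of entries
  have hAbsEntry : ∀ i k, ‖ρA' i k‖
      = (1 / p') * (Real.sqrt (ω i * ω k) * ‖Nmat k i‖) := by
    intro i k
    rw [hentry, norm_mul, norm_mul, norm_mul, norm_inv,
      Complex.norm_real, Complex.norm_real, Complex.norm_real,
      Real.norm_eq_abs, Real.norm_eq_abs, Real.norm_eq_abs,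
      abs_of_pos hp'pos, abs_of_nonneg (Real.sqrt_nonneg _),
      abs_of_nonneg (Real.sqrt_nonneg _), Real.sqrt_mul (hω i).le, one_div]
  -- part 1
  have part1 : l1Coh ρA' = (1 / p') * ∑ i, ∑ j, (if i ≠ j then
      Real.sqrt (ω i * ω j) * ‖Nmat j i‖ else 0) := by
    unfold l1Coh
    rw [Finset.mul_sum]
    refine Finset.sum_congr rfl fun i _ => ?_
    rw [Finset.mul_sum]
    refine Finset.sum_congr rfl fun j _ => ?_
    by_cases h : i = j <;> simp [h, hAbsEntry]
  refine ⟨part1, ?_⟩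
  -- part 2
  set S : ℝ := ∑ i, ∑ j, if i ≠ j then ω i * ω j else 0 with hS
  set T : ℝ := ∑ i, ∑ j, if j < i then ‖Nmat j i‖ ^ 2 else 0 with hT
  set A : ℝ := ∑ i, ∑ j, (if i ≠ j then
      Real.sqrt (ω i * ω j) * ‖Nmat j i‖ else 0) with hA
  have hSnonneg : 0 ≤ S := by
    refine Finset.sum_nonneg fun i _ => Finset.sum_nonneg fun j _ => ?_
    by_cases h : i = j <;> simp [h, mul_nonneg (hω i).le (hω j).le]
  have hTnonneg : 0 ≤ T := by
    refine Finset.sum_nonneg fun i _ => Finset.sum_nonneg fun j _ => ?_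
    by_cases h : j < i <;> simp [h, sq_nonneg]
  have hAnonneg : 0 ≤ A := by
    refine Finset.sum_nonneg fun i _ => Finset.sum_nonneg fun j _ => ?_
    by_cases h : i = j <;>
      simp [h, mul_nonneg (Real.sqrt_nonneg _) (norm_nonneg _)]
  -- Cauchy–Schwarz : A ^ 2 ≤ S * (2 * T)
  have hCS : A ^ 2 ≤ S * (2 * T) := by
    have h2T : (∑ i, ∑ j, if i ≠ j then ‖Nmat j i‖ ^ 2 else 0) = 2 * T := by
      rw [hT]
      exact offdiag_eq_two_tri (fun i j => ‖Nmat j i‖ ^ 2)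
        (fun i j => by simp only [habs i j])
    rw [← h2T]
    have key := Finset.sum_mul_sq_le_sq_mul_sq (Finset.univ : Finset (Fin dA × Fin dA))
      (fun p => if p.1 ≠ p.2 then Real.sqrt (ω p.1 * ω p.2) else 0)
      (fun p => if p.1 ≠ p.2 then ‖Nmat p.2 p.1‖ else 0)
    rw [Fintype.sum_prod_type, Fintype.sum_prod_type, Fintype.sum_prod_type] at key
    simp only [] at key
    have e1 : A = ∑ i, ∑ j, (if i ≠ j then Real.sqrt (ω i * ω j) else 0) *
        (if i ≠ j then ‖Nmat j i‖ else 0) := by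
      rw [hA]
      refine Finset.sum_congr rfl fun i _ => Finset.sum_congr rfl fun j _ => ?_
      by_cases h : i = j <;> simp [h]
    have e2 : S = ∑ i, ∑ j, (if i ≠ j then Real.sqrt (ω i * ω j) else 0) ^ 2 := by
      rw [hS]
      refine Finset.sum_congr rfl fun i _ => Finset.sum_congr rfl fun j _ => ?_
      by_cases h : i = j <;>
        simp [h, Real.sq_sqrt (mul_nonneg (hω i).le (hω j).le)]
    have e3 : (∑ i, ∑ j, if i ≠ j then ‖Nmat j i‖ ^ 2 else 0)
        = ∑ i, ∑ j, (if i ≠ j then ‖Nmat j i‖ else 0) ^ 2 := by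
      refine Finset.sum_congr rfl fun i _ => Finset.sum_congr rfl fun j _ => ?_
      by_cases h : i = j <;> simp [h]
    rw [e1, e2, e3]
    exact key
  have hfinal : A ≤ E * Real.sqrt T := by
    have h1 : A ≤ Real.sqrt (S * (2 * T)) := by
      rw [← Real.sqrt_sq hAnonneg]
      exact Real.sqrt_le_sqrt hCS
    have h2 : Real.sqrt (S * (2 * T)) = E * Real.sqrt T := by
      rw [hE, show S * (2 * T) = (2 * S) * T by ring,
        Real.sqrt_mul (by positivity)]
    linarith [h1, h2.symm.le]
  rw [part1, div_eq_mul_one_div E p', mul_comm E (1/p'), mul_assoc]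
  have hpinv : 0 ≤ 1 / p' := by positivity
  exact mul_le_mul_of_nonneg_left hfinal hpinv
end

section
/- Let |ψ^{AB}⟩ = Σ_i √ω_i |i⟩|β_i⟩ be a pure state on ℂ^d ⊗ ℂ^{d_B} with the A-marginal diagonal, and let |φ^{AB}⟩ = (1/√d) Σ_i |i⟩|β_i⟩ be the corresponding maximally entangled state. Let $(X) = Σ_n F_n X F_n† be a trace-preserving CP map (Σ_n F_n†F_n = I) on B. Then the average remotely created coherence satisfies C̄^{A|B}(|ψ⟩) ≤ (d/2) · E(|ψ⟩) · C̄^{A|B}(|φ⟩), where C̄^{A|B}(|χ⟩) := Σ_n p_n C_{l1}(tr_B[(I⊗F_n)|χ⟩⟨χ|(I⊗F_n)†]/p_n) with p_n the probability of outcome n, and E is the concurrence. -/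
open Matrix Kronecker BigOperators Finset ComplexOrder

/-- Unnormalized post-operation reduced state of A for Kraus operator `F` on B. -/
noncomputable def postA {dA dB : ℕ} (F : Matrix (Fin dB) (Fin dB) ℂ)
    (χ : Fin dA × Fin dB → ℂ) : Matrix (Fin dA) (Fin dA) ℂ :=
  ptraceB (((1 : Matrix (Fin dA) (Fin dA) ℂ) ⊗ₖ F) * Matrix.vecMulVec χ (star χ) *
    ((1 : Matrix (Fin dA) (Fin dA) ℂ) ⊗ₖ F)ᴴ)

/-- Average remotely created coherence `C̄^{A|B}(χ) = Σ_n p_n C_{l1}(ρ^A_n)`,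
the sum running over outcomes with `p_n > 0`. -/
noncomputable def avgRCC {dA dB : ℕ} {ι : Type*} [Fintype ι]
    (F : ι → Matrix (Fin dB) (Fin dB) ℂ) (χ : Fin dA × Fin dB → ℂ) : ℝ :=
  ∑ n, if 0 < ((postA (F n) χ).trace).re then
      ((postA (F n) χ).trace).re *
        l1Coh (((((postA (F n) χ).trace).re : ℂ))⁻¹ • postA (F n) χ)
    else 0

/-- Concurrence `E(ψ) = √(2(1 − tr[(tr_B|ψ⟩⟨ψ|)²]))`. -/
noncomputable def concurrence {dA dB : ℕ} (ψ : Fin dA × Fin dB → ℂ) : ℝ :=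
  Real.sqrt (2 * (1 - ((ptraceB (Matrix.vecMulVec ψ (star ψ)) *
      ptraceB (Matrix.vecMulVec ψ (star ψ))).trace).re))

lemma postA_apply {dA dB : ℕ} (F : Matrix (Fin dB) (Fin dB) ℂ)
    (χ : Fin dA × Fin dB → ℂ) (i k : Fin dA) :
    postA F χ i k =
      ∑ j, (∑ b, F j b * χ (i, b)) * (starRingEnd ℂ) (∑ c, F j c * χ (k, c)) := by
  unfold postA ptraceB
  simp only [Matrix.mul_apply, Matrix.conjTranspose_apply, Matrix.kroneckerMap_apply,
    Matrix.vecMulVec_apply, Matrix.one_apply, Fintype.sum_prod_type, Pi.star_apply,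
    ite_mul, one_mul, zero_mul, mul_ite, mul_one, mul_zero, apply_ite (star : ℂ → ℂ),
    star_zero, Finset.sum_ite_irrel, Finset.sum_const_zero, Finset.sum_ite_eq,
    Finset.sum_ite_eq', Finset.mem_univ, if_true, map_sum, _root_.map_mul, RCLike.star_def]
  refine Finset.sum_congr rfl fun j _ => ?_
  simp only [Finset.sum_mul, Finset.mul_sum]
  exact Finset.sum_congr rfl fun c _ => Finset.sum_congr rfl fun b _ => by ring

lemma l1Coh_nonneg {d : ℕ} (ρ : Matrix (Fin d) (Fin d) ℂ) : 0 ≤ l1Coh ρ :=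
  Finset.sum_nonneg fun _ _ => Finset.sum_nonneg fun _ _ => by
    split
    · exact norm_nonneg _
    · exact le_refl 0

lemma l1Coh_smul {d : ℕ} {c : ℝ} (hc : 0 < c) (ρ : Matrix (Fin d) (Fin d) ℂ) :
    c * l1Coh (((c : ℂ))⁻¹ • ρ) = l1Coh ρ := by
  unfold l1Coh
  rw [Finset.mul_sum]
  refine Finset.sum_congr rfl fun i _ => ?_
  rw [Finset.mul_sum]
  refine Finset.sum_congr rfl fun j _ => ?_
  split
  · rw [Matrix.smul_apply, smul_eq_mul, norm_mul, norm_inv, Complex.norm_real, Real.norm_eq_abs,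
      abs_of_pos hc, ← mul_assoc, mul_inv_cancel₀ hc.ne', one_mul]
  · rw [mul_zero]

/-- Theorem 3: `C̄^{A|B}(ψ) ≤ (d/2) E(ψ) C̄^{A|B}(φ)` for a trace-preserving channel on B. -/
theorem avg_RCC_upper_bound
    {d dB : ℕ} {ι : Type*} [Fintype ι]
    (ω : Fin d → ℝ) (hω : ∀ i, 0 ≤ ω i) (hωsum : ∑ i, ω i = 1)
    (β : Fin d → Fin dB → ℂ)
    (hβ : ∀ i k, ∑ j, (starRingEnd ℂ) (β i j) * β k j = if i = k then 1 else 0)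
    (ψ φ : Fin d × Fin dB → ℂ)
    (hψ : ∀ i j, ψ (i, j) = (Real.sqrt (ω i) : ℂ) * β i j)
    (hφ : ∀ i j, φ (i, j) = ((Real.sqrt d : ℝ) : ℂ)⁻¹ * β i j)
    (F : ι → Matrix (Fin dB) (Fin dB) ℂ)
    (htp : ∑ n, (F n)ᴴ * (F n) = (1 : Matrix (Fin dB) (Fin dB) ℂ)) :
    avgRCC F ψ ≤ ((d : ℝ) / 2) * concurrence ψ * avgRCC F φ := by
  classical
  have hd : (0:ℝ) < d := by
    rcases Nat.eq_zero_or_pos d with h | h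
    · exfalso; subst h; simpa using hωsum
    · exact_mod_cast h
  -- basic objects
  set v : ι → Fin d → Fin dB → ℂ := fun n i j => ∑ b, F n j b * β i b with hv
  set G : ι → Fin d → Fin d → ℂ :=
    fun n i k => ∑ j, v n i j * (starRingEnd ℂ) (v n k j) with hG
  set g : ι → Fin d → ℝ := fun n i => ∑ j, Complex.normSq (v n i j) with hg
  have hgnn : ∀ n i, 0 ≤ g n i := fun n i =>
    Finset.sum_nonneg fun j _ => Complex.normSq_nonneg _
  have hGdiag : ∀ n i, G n i i = ((g n i : ℝ) : ℂ) := by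
    intro n i
    simp only [hG, hg, Complex.mul_conj]
    push_cast
    rfl
  -- entries of postA for states of Schmidt form
  have key : ∀ (c : Fin d → ℝ) (χ : Fin d × Fin dB → ℂ),
      (∀ i j, χ (i, j) = ((c i : ℝ) : ℂ) * β i j) →
      ∀ n i k, postA (F n) χ i k = ((c i * c k : ℝ) : ℂ) * G n i k := by
    intro c χ hχ n i k
    rw [postA_apply, hG]
    simp only
    rw [Finset.mul_sum]
    refine Finset.sum_congr rfl fun j _ => ?_
    have e1 : ∀ m : Fin d, (∑ b, F n j b * χ (m, b)) = ((c m : ℝ) : ℂ) * v n m j := by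
      intro m
      simp only [hχ, hv]
      rw [Finset.mul_sum]
      exact Finset.sum_congr rfl fun b _ => by ring
    rw [e1, e1, _root_.map_mul, Complex.conj_ofReal]
    push_cast
    ring
  have hψA := key (fun i => Real.sqrt (ω i)) ψ (by intro i j; rw [hψ])
  have hφA := key (fun _ => (Real.sqrt d)⁻¹) φ (by intro i j; rw [hφ]; push_cast; ring)
  -- traces
  have htrace : ∀ (c : Fin d → ℝ) (χ : Fin d × Fin dB → ℂ)
      (hχ : ∀ n i k, postA (F n) χ i k = ((c i * c k : ℝ) : ℂ) * G n i k) (n : ι),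
      ((postA (F n) χ).trace).re = ∑ i, (c i * c i) * g n i := by
    intro c χ hχ n
    rw [Matrix.trace]
    rw [Complex.re_sum]
    refine Finset.sum_congr rfl fun i _ => ?_
    rw [Matrix.diag_apply, hχ, hGdiag, ← Complex.ofReal_mul, Complex.ofReal_re]
  have htrψ := htrace _ ψ hψA
  have htrφ := htrace _ φ hφA
  -- l1Coh of postA
  have hl1 : ∀ (c : Fin d → ℝ) (hc : ∀ i, 0 ≤ c i) (χ : Fin d × Fin dB → ℂ)
      (hχ : ∀ n i k, postA (F n) χ i k = ((c i * c k : ℝ) : ℂ) * G n i k) (n : ι),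
      l1Coh (postA (F n) χ) =
        ∑ i, ∑ k, if i ≠ k then (c i * c k) * ‖G n i k‖ else 0 := by
    intro c hc χ hχ n
    unfold l1Coh
    refine Finset.sum_congr rfl fun i _ => Finset.sum_congr rfl fun k _ => ?_
    split
    · rw [hχ, norm_mul, Complex.norm_real, Real.norm_eq_abs,
        abs_of_nonneg (mul_nonneg (hc i) (hc k))]
    · rfl
  have hl1ψ := hl1 _ (fun i => Real.sqrt_nonneg _) ψ hψA
  have hl1φ := hl1 _ (fun _ => inv_nonneg.2 (Real.sqrt_nonneg _)) φ hφA
  -- abbreviations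
  set T : ι → ℝ := fun n => ∑ i, ∑ k, if i ≠ k then ‖G n i k‖ else 0 with hT
  have hTnn : ∀ n, 0 ≤ T n := fun n =>
    Finset.sum_nonneg fun _ _ => Finset.sum_nonneg fun _ _ => by
      split
      · exact norm_nonneg _
      · exact le_refl 0
  set E : ℝ := concurrence ψ with hE
  have hEnn : 0 ≤ E := Real.sqrt_nonneg _
  -- reduced density of ψ is diagonal ω
  have hρA : ptraceB (Matrix.vecMulVec ψ (star ψ)) =
      Matrix.diagonal (fun i => ((ω i : ℝ) : ℂ)) := by
    ext i k
    show (∑ j, ψ (i, j) * (starRingEnd ℂ) (ψ (k, j))) = _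
    have : ∀ j, ψ (i, j) * (starRingEnd ℂ) (ψ (k, j)) =
        ((Real.sqrt (ω i) * Real.sqrt (ω k) : ℝ) : ℂ) *
          ((starRingEnd ℂ) (β k j) * β i j) := by
      intro j
      rw [hψ, hψ, _root_.map_mul, Complex.conj_ofReal]
      push_cast
      ring
    rw [Finset.sum_congr rfl fun j _ => this j, ← Finset.mul_sum, hβ k i]
    rcases eq_or_ne i k with h | h
    · subst h
      simp [Real.mul_self_sqrt (hω i)]
    · simp [Matrix.diagonal_apply_ne _ h, Ne.symm h]
  have hEsq : E = Real.sqrt (2 * (1 - ∑ i, ω i * ω i)) := by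
    have htr2 : ((ptraceB (Matrix.vecMulVec ψ (star ψ)) *
        ptraceB (Matrix.vecMulVec ψ (star ψ))).trace).re = ∑ i, ω i * ω i := by
      rw [hρA, Matrix.diagonal_mul_diagonal, Matrix.trace_diagonal, Complex.re_sum]
      exact Finset.sum_congr rfl fun i _ => by
        rw [← Complex.ofReal_mul, Complex.ofReal_re]
    rw [hE]
    unfold concurrence
    rw [htr2]
  -- the key scalar inequality
  have hωle1 : ∀ m, ω m ≤ 1 := by
    intro m
    rw [← hωsum]
    exact Finset.single_le_sum (fun i _ => hω i) (Finset.mem_univ m)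
  have hEineq : ∀ i k : Fin d, i ≠ k → Real.sqrt (ω i) * Real.sqrt (ω k) ≤ E / 2 := by
    intro i k hik
    have hpair : ω i + ω k ≤ 1 := by
      rw [← hωsum]
      have := Finset.sum_le_sum_of_subset_of_nonneg (f := ω)
        (Finset.subset_univ ({i, k} : Finset (Fin d))) (fun m _ _ => hω m)
      rwa [Finset.sum_pair hik] at this
    have h4 : ω i * ω k ≤ (2 * (1 - ∑ m, ω m * ω m)) * (1/4) := by
      have hsum2 : (1 : ℝ) - ∑ m, ω m * ω m = ∑ m, ω m * (1 - ω m) := by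
        have : ∑ m, ω m * (1 - ω m) = (∑ m, ω m) - ∑ m, ω m * ω m := by
          rw [← Finset.sum_sub_distrib]
          exact Finset.sum_congr rfl fun m _ => by ring
        rw [this, hωsum]
      have hlow : ω i * (1 - ω i) + ω k * (1 - ω k) ≤ ∑ m, ω m * (1 - ω m) := by
        have := Finset.sum_le_sum_of_subset_of_nonneg (f := fun m => ω m * (1 - ω m))
          (Finset.subset_univ ({i, k} : Finset (Fin d)))
          (fun m _ _ => mul_nonneg (hω m) (by linarith [hωle1 m]))
        rwa [Finset.sum_pair hik] at this
      have h1 : ω i * ω k ≤ ω i * (1 - ω i) := by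
        apply mul_le_mul_of_nonneg_left _ (hω i)
        linarith
      have h2 : ω k * ω i ≤ ω k * (1 - ω k) := by
        apply mul_le_mul_of_nonneg_left _ (hω k)
        linarith
      nlinarith
    calc Real.sqrt (ω i) * Real.sqrt (ω k) = Real.sqrt (ω i * ω k) :=
          (Real.sqrt_mul (hω i) _).symm
      _ ≤ Real.sqrt ((2 * (1 - ∑ m, ω m * ω m)) * (1/4)) := Real.sqrt_le_sqrt h4
      _ = E / 2 := by
          rw [hEsq, Real.sqrt_mul' _ (by norm_num : (0:ℝ) ≤ 1/4),
            show Real.sqrt (1/4) = 1/2 by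
              rw [show (1/4 : ℝ) = (1/2)^2 by norm_num, Real.sqrt_sq (by norm_num)]]
          ring
  -- Step A : avgRCC F ψ ≤ ∑ n, (E/2) * T n
  have stepA : avgRCC F ψ ≤ ∑ n, (E / 2) * T n := by
    rw [avgRCC]
    refine Finset.sum_le_sum fun n _ => ?_
    split
    · next hp =>
      rw [l1Coh_smul hp, hl1ψ, hT]
      simp only
      rw [Finset.mul_sum]
      refine Finset.sum_le_sum fun i _ => ?_
      rw [Finset.mul_sum]
      refine Finset.sum_le_sum fun k _ => ?_
      split
      · next hik =>
        exact mul_le_mul_of_nonneg_right (hEineq i k hik) (norm_nonneg _)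
      · rw [mul_zero]
    · exact mul_nonneg (by linarith) (hTnn n)
  -- Step B : avgRCC F φ = d⁻¹ * ∑ n, T n
  have stepB : avgRCC F φ = (d : ℝ)⁻¹ * ∑ n, T n := by
    rw [avgRCC, Finset.mul_sum]
    refine Finset.sum_congr rfl fun n _ => ?_
    have hqval : ((postA (F n) φ).trace).re = (d:ℝ)⁻¹ * ∑ i, g n i := by
      rw [htrφ, Finset.mul_sum]
      refine Finset.sum_congr rfl fun i _ => ?_
      rw [← mul_inv, Real.mul_self_sqrt hd.le]
    have hl1φ' : l1Coh (postA (F n) φ) = (d:ℝ)⁻¹ * T n := by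
      rw [hl1φ, hT]
      simp only
      rw [Finset.mul_sum]
      refine Finset.sum_congr rfl fun i _ => ?_
      rw [Finset.mul_sum]
      refine Finset.sum_congr rfl fun k _ => ?_
      split
      · rw [← mul_inv, Real.mul_self_sqrt hd.le]
      · rw [mul_zero]
    split
    · next hq => rw [l1Coh_smul hq, hl1φ']
    · next hq =>
      -- trace is zero, hence all v vanish and T n = 0
      have hs : ∑ i, g n i = 0 := by
        have h0 : 0 ≤ (d:ℝ)⁻¹ * ∑ i, g n i :=
          mul_nonneg (inv_nonneg.2 hd.le) (Finset.sum_nonneg fun i _ => hgnn n i)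
        have h1 : (d:ℝ)⁻¹ * ∑ i, g n i ≤ 0 := by
          rw [← hqval]; exact le_of_not_gt hq
        have h2 : (d:ℝ)⁻¹ * ∑ i, g n i = 0 := le_antisymm h1 h0
        rcases mul_eq_zero.1 h2 with h | h
        · exact absurd h (inv_ne_zero hd.ne')
        · exact h
      have hgz : ∀ i, g n i = 0 := by
        intro i
        have := (Finset.sum_eq_zero_iff_of_nonneg (fun i _ => hgnn n i)).1 hs
        exact this i (Finset.mem_univ i)
      have hvz : ∀ i j, v n i j = 0 := by
        intro i j
        have := (Finset.sum_eq_zero_iff_of_nonneg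
          (fun j _ => Complex.normSq_nonneg (v n i j))).1 (hgz i) j (Finset.mem_univ j)
        exact Complex.normSq_eq_zero.1 this
      have hGz : ∀ i k, G n i k = 0 := by
        intro i k
        rw [hG]
        simp only
        exact Finset.sum_eq_zero fun j _ => by rw [hvz, zero_mul]
      have hTz : T n = 0 := by
        rw [hT]
        simp only
        refine Finset.sum_eq_zero fun i _ => Finset.sum_eq_zero fun k _ => ?_
        split
        · rw [hGz, norm_zero]
        · rfl
      rw [hTz, mul_zero]
  -- combine
  rw [stepB, hE] at *
  calc avgRCC F ψ ≤ ∑ n, (E / 2) * T n := stepA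
    _ = (↑d / 2) * E * ((d : ℝ)⁻¹ * ∑ n, T n) := by
        rw [← Finset.mul_sum]
        field_simp
end

section
/- Let |ψ^{AB}⟩ = Σ_i √ω_i |i⟩|β_i⟩ and let {$_k} be a family of CP maps $_k(X) = Σ_n F^k_n X (F^k_n)† on B with Σ_k Σ_n (F^k_n)† F^k_n = I. Then the average created coherence satisfies C̄^{A|B}(|ψ⟩) := Σ_k p_k C_{l1}(tr_B[(I⊗$_k)|ψ⟩⟨ψ|]/p_k) ≤ E(|ψ⟩) · Σ_k √(Σ_{j<i} |N^k_{ji}|²), where N^k = Σ_n (F^k_n)† F^k_n, N^k_{ji} = ⟨β_j|N^k|β_i⟩, p_k = tr[(I⊗$_k)|ψ⟩⟨ψ|], and E is the concurrence. -/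
open Matrix Kronecker BigOperators Finset ComplexOrder

/-- Unnormalized post-operation reduced state of A for the CP map with Kraus operators `F k n`
(`k` fixed), applied to `|χ⟩⟨χ|`. -/
noncomputable def postAfam {dA dB : ℕ} {ι : Type*} [Fintype ι]
    (F : ι → Matrix (Fin dB) (Fin dB) ℂ) (χ : Fin dA × Fin dB → ℂ) :
    Matrix (Fin dA) (Fin dA) ℂ :=
  ptraceB (∑ n, ((1 : Matrix (Fin dA) (Fin dA) ℂ) ⊗ₖ F n) * Matrix.vecMulVec χ (star χ) *
    ((1 : Matrix (Fin dA) (Fin dA) ℂ) ⊗ₖ F n)ᴴ)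

lemma postAfam_raw {dA dB : ℕ} {ι : Type*} [Fintype ι]
    (F : ι → Matrix (Fin dB) (Fin dB) ℂ) (χ : Fin dA × Fin dB → ℂ) (i i' : Fin dA) :
    postAfam F χ i i' = ∑ n, ∑ j, ∑ a, ∑ b,
      F n j a * χ (i, a) * star (χ (i', b)) * star (F n j b) := by
  simp only [postAfam, ptraceB, Matrix.sum_apply, Matrix.mul_apply, Matrix.vecMulVec_apply,
    Matrix.kroneckerMap_apply, Matrix.one_apply, Matrix.conjTranspose_apply,
    Fintype.sum_prod_type, ite_mul, one_mul, zero_mul, mul_ite, mul_one, mul_zero,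
    Finset.sum_ite_irrel, Finset.sum_const_zero, Finset.sum_ite_eq, Finset.sum_ite_eq',
    Finset.mem_univ, if_true, apply_ite (star : ℂ → ℂ), star_zero, Pi.star_apply]
  rw [Finset.sum_comm]
  refine Finset.sum_congr rfl fun n _ => ?_
  refine Finset.sum_congr rfl fun j _ => ?_
  rw [Finset.sum_comm]
  refine Finset.sum_congr rfl fun a _ => ?_
  rw [Finset.sum_mul]
  refine Finset.sum_congr rfl fun b _ => ?_
  ring

lemma sum_swap4 {M : Type*} [AddCommMonoid M] {α β γ δ : Type*}
    [Fintype α] [Fintype β] [Fintype γ] [Fintype δ] (f : α → β → γ → δ → M) :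
    ∑ a, ∑ b, ∑ c, ∑ d, f a b c d = ∑ d, ∑ c, ∑ a, ∑ b, f a b c d := by
  calc ∑ a, ∑ b, ∑ c, ∑ d, f a b c d
      = ∑ a, ∑ c, ∑ b, ∑ d, f a b c d :=
        Finset.sum_congr rfl fun a _ => Finset.sum_comm
    _ = ∑ c, ∑ a, ∑ b, ∑ d, f a b c d := Finset.sum_comm
    _ = ∑ c, ∑ a, ∑ d, ∑ b, f a b c d :=
        Finset.sum_congr rfl fun c _ => Finset.sum_congr rfl fun a _ => Finset.sum_comm
    _ = ∑ c, ∑ d, ∑ a, ∑ b, f a b c d :=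
        Finset.sum_congr rfl fun c _ => Finset.sum_comm
    _ = ∑ d, ∑ c, ∑ a, ∑ b, f a b c d := Finset.sum_comm

lemma two_mul_lt {n : ℕ} (f : Fin n → Fin n → ℝ) (hsym : ∀ i j, f i j = f j i) :
    ∑ i, ∑ j, (if i ≠ j then f i j else 0)
      = 2 * ∑ i, ∑ j, (if j < i then f i j else 0) := by
  have h : ∀ i j : Fin n, (if i ≠ j then f i j else 0)
      = (if j < i then f i j else 0) + (if i < j then f i j else 0) := by
    intro i j
    rcases lt_trichotomy i j with h | h | h
    · simp [h, h.ne, not_lt.mpr h.le]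
    · simp [h, lt_irrefl]
    · simp [h, h.ne', not_lt.mpr h.le]
  simp only [h, Finset.sum_add_distrib]
  have h2 : ∑ i, ∑ j, (if i < j then f i j else 0)
      = ∑ i, ∑ j, (if j < i then f i j else 0) := by
    rw [Finset.sum_comm]
    exact Finset.sum_congr rfl fun i _ => Finset.sum_congr rfl fun j _ => by rw [hsym]
  rw [h2]; ring

/-- Tighter average bound (Remark, Eq. (bound3)):
`C̄^{A|B}(ψ) ≤ E(ψ) Σ_k √(Σ_{j<i}|N^k_{ji}|²)` for a family of CP maps `$_k`
with `Σ_k Σ_n (F^k_n)†F^k_n = I`. -/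
theorem avg_RCC_tighter_bound
    {d dB : ℕ} {κ ι : Type*} [Fintype κ] [Fintype ι]
    (ω : Fin d → ℝ) (hω : ∀ i, 0 ≤ ω i) (hωsum : ∑ i, ω i = 1)
    (β : Fin d → Fin dB → ℂ)
    (hβ : ∀ i k, ∑ j, (starRingEnd ℂ) (β i j) * β k j = if i = k then 1 else 0)
    (ψ : Fin d × Fin dB → ℂ)
    (hψ : ∀ i j, ψ (i, j) = (Real.sqrt (ω i) : ℂ) * β i j)
    (F : κ → ι → Matrix (Fin dB) (Fin dB) ℂ)
    (htp : ∑ k, ∑ n, (F k n)ᴴ * (F k n) = (1 : Matrix (Fin dB) (Fin dB) ℂ))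
    (N : κ → Matrix (Fin dB) (Fin dB) ℂ)
    (hN : ∀ k, N k = ∑ n, (F k n)ᴴ * (F k n))
    (Nmat : κ → Fin d → Fin d → ℂ)
    (hNmat : ∀ k j i, Nmat k j i = ∑ l, ∑ m, (starRingEnd ℂ) (β j l) * (N k) l m * β i m)
    (E : ℝ) (hE : E = Real.sqrt (2 * ∑ i, ∑ j, if i ≠ j then ω i * ω j else 0)) :
    (∑ k, if 0 < ((postAfam (F k) ψ).trace).re then
        ((postAfam (F k) ψ).trace).re *
          l1Coh (((((postAfam (F k) ψ).trace).re : ℂ))⁻¹ • postAfam (F k) ψ)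
      else 0)
      ≤ E * ∑ k, Real.sqrt (∑ i, ∑ j,
          if j < i then ‖Nmat k j i‖ ^ 2 else 0) := by
  have hE0 : 0 ≤ E := hE ▸ Real.sqrt_nonneg _
  -- Hermiticity of N
  have hNherm : ∀ k l m, (starRingEnd ℂ) (N k l m) = N k m l := by
    intro k l m
    rw [hN]
    simp only [Matrix.sum_apply, map_sum]
    refine Finset.sum_congr rfl fun n _ => ?_
    rw [Matrix.mul_apply, Matrix.mul_apply, map_sum]
    refine Finset.sum_congr rfl fun j _ => ?_
    simp only [Matrix.conjTranspose_apply, Complex.star_def, _root_.map_mul,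
      Complex.conj_conj]
    ring
  -- Hermiticity of Nmat (absolute values are symmetric)
  have hNswap : ∀ k i j, ‖Nmat k j i‖ = ‖Nmat k i j‖ := by
    intro k i j
    have hrw : Nmat k j i = (starRingEnd ℂ) (Nmat k i j) := by
      rw [hNmat k j i, hNmat k i j, Finset.sum_comm]
      simp only [map_sum, _root_.map_mul, Complex.conj_conj]
      refine Finset.sum_congr rfl fun l _ => Finset.sum_congr rfl fun m _ => ?_
      rw [hNherm]
      ring
    rw [hrw, Complex.norm_conj]
  -- Entry formula for the unnormalized post-operation state
  have hent : ∀ k (i i' : Fin d), postAfam (F k) ψ i i'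
      = ((Real.sqrt (ω i) : ℂ) * (Real.sqrt (ω i') : ℂ)) * Nmat k i' i := by
    intro k i i'
    have hNa : ∀ l m, N k l m = ∑ n, ∑ j, (starRingEnd ℂ) (F k n j l) * F k n j m := by
      intro l m
      rw [hN]
      simp only [Matrix.sum_apply, Matrix.mul_apply, Matrix.conjTranspose_apply,
        Complex.star_def]
    rw [postAfam_raw, hNmat]
    simp only [hψ, hNa]
    simp only [Finset.mul_sum, Finset.sum_mul]
    rw [sum_swap4]
    refine Finset.sum_congr rfl fun b _ => Finset.sum_congr rfl fun a _ =>
      Finset.sum_congr rfl fun n _ => Finset.sum_congr rfl fun j _ => ?_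
    simp only [star_mul', Complex.star_def, Complex.conj_ofReal]
    ring
  rw [Finset.mul_sum]
  apply Finset.sum_le_sum
  intro k _
  by_cases hpos : 0 < ((postAfam (F k) ψ).trace).re
  swap
  · rw [if_neg hpos]
    exact mul_nonneg hE0 (Real.sqrt_nonneg _)
  rw [if_pos hpos]
  set pk : ℝ := ((postAfam (F k) ψ).trace).re with hpk
  set A : Matrix (Fin d) (Fin d) ℂ := postAfam (F k) ψ with hA
  -- step 1: the normalization cancels
  have hsc : pk * l1Coh (((pk : ℂ))⁻¹ • A)
      = ∑ i, ∑ j, if i ≠ j then ‖A i j‖ else 0 := by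
    unfold l1Coh
    rw [Finset.mul_sum]
    refine Finset.sum_congr rfl fun i _ => ?_
    rw [Finset.mul_sum]
    refine Finset.sum_congr rfl fun j _ => ?_
    by_cases hij : i ≠ j
    · rw [if_pos hij, if_pos hij, Matrix.smul_apply, smul_eq_mul, norm_mul, norm_inv,
        Complex.norm_real, Real.norm_eq_abs, abs_of_pos hpos, ← mul_assoc, mul_inv_cancel₀ hpos.ne', one_mul]
    · rw [if_neg hij, if_neg hij, mul_zero]
  rw [hsc]
  -- abbreviations
  set f : Fin d → Fin d → ℝ :=
    fun i j => Real.sqrt (ω i) * Real.sqrt (ω j) * ‖Nmat k j i‖ with hf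
  have habsA : ∀ i j, ‖A i j‖ = f i j := by
    intro i j
    rw [hA, hent k i j, norm_mul, norm_mul, Complex.norm_real, Real.norm_eq_abs,
      Complex.norm_real, Real.norm_eq_abs, abs_of_nonneg (Real.sqrt_nonneg _),
      abs_of_nonneg (Real.sqrt_nonneg _), hf]
  have hfsym : ∀ i j, f i j = f j i := by
    intro i j
    simp only [hf]
    rw [hNswap]
    ring
  -- lower-triangular pair set
  set s : Finset (Fin d × Fin d) :=
    (Finset.univ ×ˢ Finset.univ).filter (fun p : Fin d × Fin d => p.2 < p.1) with hs
  have hconv : ∀ (g : Fin d → Fin d → ℝ),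
      ∑ i, ∑ j, (if j < i then g i j else 0) = ∑ p ∈ s, g p.1 p.2 := by
    intro g
    rw [hs, Finset.sum_filter, Finset.sum_product]
  set u : Fin d × Fin d → ℝ := fun p => Real.sqrt (ω p.1) * Real.sqrt (ω p.2) with hu
  set v : Fin d × Fin d → ℝ := fun p => ‖Nmat k p.2 p.1‖ with hv
  -- Cauchy–Schwarz
  have hcs : ∑ p ∈ s, u p * v p
      ≤ Real.sqrt (∑ p ∈ s, u p ^ 2) * Real.sqrt (∑ p ∈ s, v p ^ 2) := by
    have h := Finset.sum_mul_sq_le_sq_mul_sq s u v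
    have hnn : 0 ≤ ∑ p ∈ s, u p * v p :=
      Finset.sum_nonneg fun p _ => mul_nonneg
        (mul_nonneg (Real.sqrt_nonneg _) (Real.sqrt_nonneg _)) (norm_nonneg _)
    calc ∑ p ∈ s, u p * v p = Real.sqrt ((∑ p ∈ s, u p * v p) ^ 2) :=
          (Real.sqrt_sq hnn).symm
      _ ≤ Real.sqrt ((∑ p ∈ s, u p ^ 2) * ∑ p ∈ s, v p ^ 2) := Real.sqrt_le_sqrt h
      _ = _ := Real.sqrt_mul (Finset.sum_nonneg fun p _ => sq_nonneg _) _
  have hu2 : ∑ p ∈ s, u p ^ 2 = ∑ p ∈ s, ω p.1 * ω p.2 := by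
    refine Finset.sum_congr rfl fun p _ => ?_
    rw [hu, mul_pow, Real.sq_sqrt (hω _), Real.sq_sqrt (hω _)]
  -- identify E
  have hE2 : E = 2 * Real.sqrt (∑ p ∈ s, ω p.1 * ω p.2) := by
    rw [hE, two_mul_lt (fun i j => ω i * ω j) (fun i j => mul_comm _ _), hconv]
    rw [show (2 : ℝ) * (2 * ∑ p ∈ s, ω p.1 * ω p.2) = 2 ^ 2 * ∑ p ∈ s, ω p.1 * ω p.2 by ring,
      Real.sqrt_mul (by positivity), Real.sqrt_sq (by norm_num)]
  calc ∑ i, ∑ j, (if i ≠ j then ‖A i j‖ else 0)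
      = 2 * ∑ p ∈ s, u p * v p := by
        simp only [habsA]
        rw [two_mul_lt f hfsym, hconv]
    _ ≤ 2 * (Real.sqrt (∑ p ∈ s, u p ^ 2) * Real.sqrt (∑ p ∈ s, v p ^ 2)) := by
        exact mul_le_mul_of_nonneg_left hcs (by norm_num)
    _ = E * Real.sqrt (∑ p ∈ s, v p ^ 2) := by rw [hE2, hu2]; ring
    _ = E * Real.sqrt (∑ i, ∑ j, if j < i then ‖Nmat k j i‖ ^ 2 else 0) := by
        rw [hconv fun i j => ‖Nmat k j i‖ ^ 2]
end
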